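/- Let $V$ be a finite-dimensional real vector space and $c : V \to \mathbb C$ a charge on $X \subset V \setminus \{0\}$ (an $\mathbb R$-linear map with $0 \notin c(X)$ and $\operatorname{span}_{\ge 0}c(X) \cap (-\operatorname{span}_{\ge 0}c(X)) = \{0\}$). Let $\arg_c : X \to \mathbb R$ be a continuous argument function of $c$ on $X$. Then the binary relation $x \preceq_c y$ iff $\arg_c x \le \arg_c y$ is a convex preorder on $X$. -/

import Mathlib

open scoped BigOperators

/-- `nnspan S` is the set of finite linear combinations of elements of `S`
with non-negative real coefficients (by convention `nnspan ∅ = {0}`). -/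
def nnspan {V : Type*} [AddCommGroup V] [Module ℝ V] (S : Set V) : Set V :=
  {x | ∃ (n : ℕ) (c : Fin n → ℝ) (v : Fin n → V),
    (∀ i, 0 ≤ c i) ∧ (∀ i, v i ∈ S) ∧ x = ∑ i, c i • v i}

/-- Minkowski sum of two subsets of `V`. -/
def setAdd {V : Type*} [AddCommGroup V] [Module ℝ V] (A B : Set V) : Set V :=
  {z | ∃ a ∈ A, ∃ b ∈ B, z = a + b}

/-- Elements of `X` strictly below `x` for the preorder `le`. -/
def strictBelow {V : Type*} [AddCommGroup V] [Module ℝ V]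
    (le : V → V → Prop) (x : V) (X : Set V) : Set V :=
  {y ∈ X | le y x ∧ ¬ le x y}

/-- Elements of `X` strictly above `x` for the preorder `le`. -/
def strictAbove {V : Type*} [AddCommGroup V] [Module ℝ V]
    (le : V → V → Prop) (x : V) (X : Set V) : Set V :=
  {y ∈ X | le x y ∧ ¬ le y x}

/-- The `le`-equivalence class of `x` inside `X`. -/
def eqClass {V : Type*} [AddCommGroup V] [Module ℝ V]
    (le : V → V → Prop) (x : V) (X : Set V) : Set V :=
  {y ∈ X | le x y ∧ le y x}

/-- A convex preorder on `X ⊆ V \ {0}`: a total preorder on `X` such that for every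
equivalence class `𝒞`, the triple (strictly below `𝒞`, `𝒞`, strictly above `𝒞`) is a
face, i.e. for any non-negative combinations `x₋` (of the strictly-below set) and `x₊`
(of the strictly-above set) with `x₋ - x₊ ∈ span ℝ 𝒞`, one has `x₋ = x₊ = 0`. -/
def IsConvexPreorder {V : Type*} [AddCommGroup V] [Module ℝ V]
    (X : Set V) (le : V → V → Prop) : Prop :=
  (∀ x ∈ X, le x x) ∧
  (∀ x ∈ X, ∀ y ∈ X, ∀ z ∈ X, le x y → le y z → le x z) ∧
  (∀ x ∈ X, ∀ y ∈ X, le x y ∨ le y x) ∧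
  (∀ x ∈ X, ∀ xm ∈ nnspan (strictBelow le x X), ∀ xp ∈ nnspan (strictAbove le x X),
    xm - xp ∈ Submodule.span ℝ (eqClass le x X) → xm = 0 ∧ xp = 0)


lemma nnspan_neg_aux {V : Type*} [AddCommGroup V] [Module ℝ V]
    (g : V →ₗ[ℝ] ℝ) (S : Set V) (hS : ∀ y ∈ S, g y < 0) :
    ∀ w ∈ nnspan S, g w ≤ 0 ∧ (g w = 0 → w = 0) := by
  rintro w ⟨n, co, v, hco, hv, rfl⟩
  have hterm : ∀ i, co i * g (v i) ≤ 0 := fun i =>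
    mul_nonpos_of_nonneg_of_nonpos (hco i) (hS _ (hv i)).le
  have hg : g (∑ i, co i • v i) = ∑ i, co i * g (v i) := by
    simp [map_sum, map_smul, smul_eq_mul]
  constructor
  · rw [hg]; exact Finset.sum_nonpos (fun i _ => hterm i)
  · intro h0
    rw [hg] at h0
    have hz := (Finset.sum_eq_zero_iff_of_nonpos (fun i _ => hterm i)).mp h0
    have hco0 : ∀ i, co i = 0 := by
      intro i
      rcases mul_eq_zero.mp (hz i (Finset.mem_univ i)) with h | h
      · exact h
      · exact absurd h (ne_of_lt (hS _ (hv i)))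
    simp [hco0]

lemma im_mul_exp_aux (r t : ℝ) :
    ((r : ℂ) * Complex.exp (t * Complex.I)).im = r * Real.sin t := by
  simp [Complex.exp_ofReal_mul_I_im]

/-- Let `c : V → ℂ` be a charge on `X ⊆ V \ {0}` (an `ℝ`-linear map
with `0 ∉ c(X)` and `nnspan c(X) ∩ (-nnspan c(X)) = {0}`), and let `arg_c` be a
continuous argument function of `c` on `X` (its values lie in an interval of length
`π`). Then `x ⪯_c y ↔ arg_c x ≤ arg_c y` is a convex preorder on `X`. -/
theorem charge_convexPreorder {V : Type*} [AddCommGroup V] [Module ℝ V]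
    [FiniteDimensional ℝ V]
    (X : Set V) (hX0 : (0 : V) ∉ X)
    (c : V →ₗ[ℝ] ℂ)
    (hc0 : (0 : ℂ) ∉ c '' X)
    (hsal : nnspan (c '' X) ∩ (-nnspan (c '' X)) = {(0 : ℂ)})
    (argc : V → ℝ)
    (harg : ∀ x ∈ X, c x = (‖c x‖ : ℂ) * Complex.exp (argc x * Complex.I))
    (hbranch : ∃ θ : ℝ, ∀ x ∈ X, argc x ∈ Set.Icc θ (θ + Real.pi)) :
    IsConvexPreorder X (fun x y => argc x ≤ argc y) := by
  obtain ⟨θ, hθ⟩ := hbranch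
  refine ⟨fun x _ => le_refl _, fun x _ y _ z _ => le_trans,
    fun x _ y _ => le_total _ _, ?_⟩
  intro x hx xm hxm xp hxp hspan
  set α := argc x with hα
  have hcne : ∀ y ∈ X, c y ≠ 0 := by
    intro y hy h
    exact hc0 ⟨y, hy, h⟩
  have habs : ∀ y ∈ X, 0 < ‖c y‖ := fun y hy =>
    norm_pos_iff.mpr (hcne y hy)
  set f : V →ₗ[ℝ] ℝ :=
    Complex.imLm.comp ((LinearMap.mulRight ℝ (Complex.exp ((-α : ℝ) * Complex.I))).comp c)
    with hf
  have hfval : ∀ y ∈ X, f y = ‖c y‖ * Real.sin (argc y - α) := by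
    intro y hy
    have h0 : f y = (c y * Complex.exp ((-α : ℝ) * Complex.I)).im := rfl
    have he : (argc y : ℂ) * Complex.I + (-α : ℝ) * Complex.I
        = ((argc y - α : ℝ) : ℂ) * Complex.I := by push_cast; ring
    rw [h0]
    conv_lhs => rw [harg y hy, mul_assoc, ← Complex.exp_add, he]
    exact im_mul_exp_aux _ _
  have hanti : ∀ y ∈ X, argc y - α ≠ -Real.pi ∧ argc y - α ≠ Real.pi := by
    intro y hy
    have key : Complex.exp ((argc y : ℝ) * Complex.I)
        = -Complex.exp ((α : ℝ) * Complex.I) → False := by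
      intro hexp
      set ey := Complex.exp ((α : ℝ) * Complex.I) with hey
      set ay := ‖c y‖ with hay
      set ax := ‖c x‖ with hax
      have hcy : c y = -((ay : ℂ) * ey) := by
        rw [harg y hy, hexp]; ring
      have hcx : c x = (ax : ℂ) * ey := harg x hx
      have hz : (ax : ℂ) * c y ∈ nnspan (c '' X) :=
        ⟨1, fun _ => ax, fun _ => c y,
          fun _ => hax ▸ norm_nonneg _, fun _ => ⟨y, hy, rfl⟩, by
            simp [Complex.real_smul]⟩
      have hz' : (ax : ℂ) * c y ∈ -nnspan (c '' X) := by
        rw [Set.mem_neg]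
        refine ⟨1, fun _ => ay, fun _ => c x,
          fun _ => hay ▸ norm_nonneg _, fun _ => ⟨x, hx, rfl⟩, ?_⟩
        simp only [Fin.sum_univ_one, Complex.real_smul]
        rw [hcy, hcx]; ring
      have hzz : (ax : ℂ) * c y = 0 := by
        have := Set.mem_inter hz hz'
        rw [hsal] at this
        exact this
      rcases mul_eq_zero.mp hzz with h | h
      · exact (habs x hx).ne' (by exact_mod_cast hax ▸ h)
      · exact hcne y hy h
    constructor
    · intro h
      refine key ?_
      have h1 : (argc y : ℝ) = α + -Real.pi := by linarith [sub_eq_iff_eq_add.mp h]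
      have h2 : ((α + -Real.pi : ℝ) : ℂ) * Complex.I
          = (α : ℝ) * Complex.I + -((Real.pi : ℂ) * Complex.I) := by push_cast; ring
      rw [h1, h2, Complex.exp_add, Complex.exp_neg, Complex.exp_pi_mul_I]
      ring
    · intro h
      refine key ?_
      have h1 : (argc y : ℝ) = α + Real.pi := by linarith [sub_eq_iff_eq_add.mp h]
      have h2 : ((α + Real.pi : ℝ) : ℂ) * Complex.I
          = (α : ℝ) * Complex.I + (Real.pi : ℂ) * Complex.I := by push_cast; ring
      rw [h1, h2, Complex.exp_add, Complex.exp_pi_mul_I]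
      ring
  have hbelow : ∀ y ∈ strictBelow (fun x y => argc x ≤ argc y) x X, f y < 0 := by
    rintro y ⟨hy, hle, hnle⟩
    have hlt : argc y < α := not_le.mp hnle
    have h1 : -Real.pi ≤ argc y - α := by
      have := (hθ y hy).1; have := (hθ x hx).2; simp only [← hα] at *; linarith
    have h1' : -Real.pi < argc y - α := lt_of_le_of_ne h1 (Ne.symm (hanti y hy).1)
    rw [hfval y hy]
    exact mul_neg_of_pos_of_neg (habs y hy)
      (Real.sin_neg_of_neg_of_neg_pi_lt (by linarith) h1')
  have habove : ∀ y ∈ strictAbove (fun x y => argc x ≤ argc y) x X, (-f) y < 0 := by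
    rintro y ⟨hy, hle, hnle⟩
    have hlt : α < argc y := not_le.mp hnle
    have h1 : argc y - α ≤ Real.pi := by
      have := (hθ y hy).2; have := (hθ x hx).1; simp only [← hα] at *; linarith
    have h1' : argc y - α < Real.pi := lt_of_le_of_ne h1 (hanti y hy).2
    have hpos : 0 < f y := by
      rw [hfval y hy]
      exact mul_pos (habs y hy) (Real.sin_pos_of_pos_of_lt_pi (by linarith) h1')
    simpa using neg_neg_of_pos hpos
  have hker : f (xm - xp) = 0 := by
    have hsub : eqClass (fun x y => argc x ≤ argc y) x X ⊆ (LinearMap.ker f : Set V) := by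
      rintro y ⟨hy, h1, h2⟩
      have heq : argc y = α := le_antisymm h2 h1
      simp only [SetLike.mem_coe, LinearMap.mem_ker]
      rw [hfval y hy, heq]
      simp
    have := Submodule.span_le.mpr hsub hspan
    simpa using this
  obtain ⟨hm1, hm2⟩ := nnspan_neg_aux f _ hbelow xm hxm
  obtain ⟨hp1, hp2⟩ := nnspan_neg_aux (-f) _ habove xp hxp
  have hp1' : 0 ≤ f xp := by simpa using hp1
  have heqfp : f xm = f xp := by
    have : f xm - f xp = 0 := by rw [← map_sub]; exact hker
    linarith
  have hfm0 : f xm = 0 := le_antisymm hm1 (by linarith)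
  have hfp0 : f xp = 0 := by linarith
  exact ⟨hm2 hfm0, hp2 (by simp [hfp0])⟩
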